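/- If f : ℝⁿ → ℝ is Lipschitz and directionally differentiable at x, then sup_{0<|h|≤r} |(f(x+h)-f(x))/|h| - D_{h/|h|} f(x)| → 0 as r → 0⁺. -/

import Mathlib

open Filter Topology

/-- If `f` is Lipschitz and directionally differentiable at `x`, then
`sup_{0<|h|≤r} |(f(x+h)-f(x))/|h| - D_{h/|h|} f(x)| → 0` as `r → 0⁺`. -/
theorem uniform_directional_approximation
    (n : ℕ) (K : NNReal) (f : EuclideanSpace ℝ (Fin n) → ℝ)
    (hf : LipschitzWith K f) (x : EuclideanSpace ℝ (Fin n))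
    (D : EuclideanSpace ℝ (Fin n) → ℝ)
    (hD : ∀ θ : EuclideanSpace ℝ (Fin n), ‖θ‖ = 1 →
      Tendsto (fun lam : ℝ => (f (x + lam • θ) - f x) / lam) (𝓝[>] (0 : ℝ)) (𝓝 (D θ))) :
    ∀ ε : ℝ, 0 < ε → ∃ r : ℝ, 0 < r ∧ ∀ h : EuclideanSpace ℝ (Fin n), h ≠ 0 → ‖h‖ ≤ r →
      |(f (x + h) - f x) / ‖h‖ - D (‖h‖⁻¹ • h)| ≤ ε := by
  classical
  intro ε hε
  let E := EuclideanSpace ℝ (Fin n)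
  have hK1 : (0:ℝ) < (K:ℝ) + 1 := by positivity
  set δ : ℝ := ε / (3 * ((K:ℝ) + 1)) with hδdef
  have hδ : 0 < δ := by positivity
  -- difference quotients are K-Lipschitz in the direction, uniformly in lam
  have key : ∀ (θ θ' : E) (lam : ℝ), 0 < lam →
      |(f (x + lam • θ) - f x) / lam - (f (x + lam • θ') - f x) / lam| ≤ (K:ℝ) * ‖θ - θ'‖ := by
    intro θ θ' lam hlam
    have h1 : (f (x + lam • θ) - f x) / lam - (f (x + lam • θ') - f x) / lam
        = (f (x + lam • θ) - f (x + lam • θ')) / lam := by ring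
    rw [h1, abs_div, abs_of_pos hlam, div_le_iff₀ hlam]
    have h2 := hf.dist_le_mul (x + lam • θ) (x + lam • θ')
    rw [Real.dist_eq] at h2
    have h3 : dist (x + lam • θ) (x + lam • θ') = lam * ‖θ - θ'‖ := by
      rw [dist_eq_norm]
      have e : (x + lam • θ) - (x + lam • θ') = lam • (θ - θ') := by module
      rw [e, norm_smul, Real.norm_eq_abs, abs_of_pos hlam]
    calc |f (x + lam • θ) - f (x + lam • θ')| ≤ (K:ℝ) * (lam * ‖θ - θ'‖) := by
          rw [← h3]; exact h2
      _ = (K:ℝ) * ‖θ - θ'‖ * lam := by ring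
  -- hence D is K-Lipschitz on unit vectors
  have Dlip : ∀ θ θ' : E, ‖θ‖ = 1 → ‖θ'‖ = 1 → |D θ - D θ'| ≤ (K:ℝ) * ‖θ - θ'‖ := by
    intro θ θ' h1 h2
    have htend := ((hD θ h1).sub (hD θ' h2)).abs
    refine le_of_tendsto htend ?_
    filter_upwards [self_mem_nhdsWithin] with lam hlam
    exact key θ θ' lam hlam
  -- for each direction, a radius on which the quotient is ε/3-close to D
  have hR : ∀ θ : E, ∃ r : ℝ, 0 < r ∧ ∀ lam ∈ Set.Ioc (0:ℝ) r, ‖θ‖ = 1 →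
      |(f (x + lam • θ) - f x) / lam - D θ| ≤ ε / 3 := by
    intro θ
    by_cases h1 : ‖θ‖ = 1
    · have h2 := (Metric.tendsto_nhds.mp (hD θ h1)) (ε/3) (by positivity)
      rw [eventually_iff, mem_nhdsGT_iff_exists_Ioc_subset] at h2
      obtain ⟨u, hu, hsub⟩ := h2
      refine ⟨u, hu, fun lam hlam _ => ?_⟩
      have h3 := hsub hlam
      simp only [Set.mem_setOf_eq, Real.dist_eq] at h3
      exact h3.le
    · exact ⟨1, one_pos, fun lam _ h => absurd h h1⟩
  choose R hRpos hRest using hR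
  -- compactness of the sphere: finite subcover by δ-balls
  have hcomp : IsCompact (Metric.sphere (0:E) 1) := isCompact_sphere 0 1
  have hcover : Metric.sphere (0:E) 1 ⊆ ⋃ θ ∈ Metric.sphere (0:E) 1, Metric.ball θ δ :=
    fun θ hθ => Set.mem_biUnion hθ (Metric.mem_ball_self hδ)
  obtain ⟨t, hts, htfin, htcov⟩ := hcomp.elim_finite_subcover_image
    (fun θ _ => Metric.isOpen_ball) hcover
  set T : Finset ℝ := insert (1:ℝ) (htfin.toFinset.image R) with hT
  have hTne : T.Nonempty := ⟨1, Finset.mem_insert_self _ _⟩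
  refine ⟨T.min' hTne, ?_, ?_⟩
  · apply (Finset.lt_min'_iff _ _).mpr
    intro y hy
    rw [hT, Finset.mem_insert] at hy
    rcases hy with rfl | hy
    · exact one_pos
    · obtain ⟨θ, _, rfl⟩ := Finset.mem_image.mp hy
      exact hRpos θ
  intro h hne hhr
  have hnorm : 0 < ‖h‖ := norm_pos_iff.mpr hne
  set θ : E := ‖h‖⁻¹ • h with hθdef
  have hθ1 : ‖θ‖ = 1 := by
    rw [hθdef, norm_smul, norm_inv, norm_norm, inv_mul_cancel₀ hnorm.ne']
  have hθS : θ ∈ Metric.sphere (0:E) 1 := by simp [hθ1]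
  have hmem := htcov hθS
  simp only [Set.mem_iUnion] at hmem
  obtain ⟨θ₀, hθ₀t, hball⟩ := hmem
  have hθ₀1 : ‖θ₀‖ = 1 := by simpa using hts hθ₀t
  have hdist : ‖θ - θ₀‖ < δ := by
    exact lt_of_eq_of_lt (dist_eq_norm θ θ₀).symm (Metric.mem_ball.mp hball)
  have hrle : T.min' hTne ≤ R θ₀ := by
    apply Finset.min'_le
    rw [hT, Finset.mem_insert]
    exact Or.inr (Finset.mem_image.mpr ⟨θ₀, htfin.mem_toFinset.mpr hθ₀t, rfl⟩)
  have hlam : ‖h‖ ∈ Set.Ioc (0:ℝ) (R θ₀) := ⟨hnorm, hhr.trans hrle⟩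
  have e1 := hRest θ₀ ‖h‖ hlam hθ₀1
  have e2 := key θ θ₀ ‖h‖ hnorm
  have e3 := Dlip θ₀ θ hθ₀1 hθ1
  rw [norm_sub_rev θ₀ θ] at e3
  have hxh : x + ‖h‖ • θ = x + h := by
    rw [hθdef, smul_smul, mul_inv_cancel₀ hnorm.ne', one_smul]
  have hKδ : (K:ℝ) * ‖θ - θ₀‖ ≤ ε / 3 := by
    have h1 : (K:ℝ) * ‖θ - θ₀‖ ≤ (K:ℝ) * δ :=
      mul_le_mul_of_nonneg_left hdist.le K.coe_nonneg
    refine h1.trans ?_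
    have h2 : (K:ℝ)/((K:ℝ)+1) ≤ 1 := div_le_one_of_le₀ (by linarith) (by positivity)
    calc (K:ℝ) * δ = (ε/3) * ((K:ℝ)/((K:ℝ)+1)) := by rw [hδdef]; field_simp
      _ ≤ (ε/3) * 1 := mul_le_mul_of_nonneg_left h2 (by positivity)
      _ = ε/3 := mul_one _
  have hA : (f (x + h) - f x) / ‖h‖ = (f (x + ‖h‖ • θ) - f x) / ‖h‖ := by rw [hxh]
  have tri1 : |(f (x + ‖h‖ • θ) - f x) / ‖h‖ - D θ|
      ≤ |(f (x + ‖h‖ • θ) - f x) / ‖h‖ - D θ₀| + |D θ₀ - D θ| :=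
    abs_sub_le _ _ _
  have tri2 : |(f (x + ‖h‖ • θ) - f x) / ‖h‖ - D θ₀|
      ≤ |(f (x + ‖h‖ • θ) - f x) / ‖h‖ - (f (x + ‖h‖ • θ₀) - f x) / ‖h‖|
        + |(f (x + ‖h‖ • θ₀) - f x) / ‖h‖ - D θ₀| :=
    abs_sub_le _ _ _
  show |(f (x + h) - f x) / ‖h‖ - D θ| ≤ ε
  rw [hA]
  linarith
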